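/- Let T > 0, K ≥ 0, let a : [0,T] → ℝ be continuous and nonnegative, and let H : [0,T] → ℝ be differentiable and nonnegative with H′(t) ≤ a(t) H(t) + K √(H(t)) for all t ∈ [0,T]. Then for all t ∈ [0,T]: H(t) ≤ exp( ∫₀ᵗ a(s) ds ) · ( √(H(0)) + (K/2) t )². -/

import Mathlib

open MeasureTheory Set

noncomputable section

abbrev Sp := Fin 3 → ℝ

def e3 (i : Fin 3) : Sp := Pi.single i 1

def box (L : ℝ) : Set Sp := Set.univ.pi fun _ => Set.Icc 0 L

def Per {α : Type*} (L : ℝ) (f : Sp → α) : Prop :=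
  ∀ (x : Sp) (i : Fin 3), f (x + L • e3 i) = f x

def pd (i : Fin 3) (f : Sp → ℝ) (x : Sp) : ℝ := fderiv ℝ f x (e3 i)

def Dn (n : ℕ) (f : Sp → ℝ) (x : Sp) (m : Fin n → Fin 3) : ℝ :=
  iteratedFDeriv ℝ n f x fun k => e3 (m k)

def gradSq (n : ℕ) (f : Sp → ℝ) (x : Sp) : ℝ :=
  ∑ m : Fin n → Fin 3, (Dn n f x m) ^ 2

def gradSqV (n : ℕ) (u : Sp → Sp) (x : Sp) : ℝ :=
  ∑ i : Fin 3, gradSq n (fun y => u y i) x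

def Pnorm (L : ℝ) (n : ℕ) (f : Sp → ℝ) : ℝ := ∫ x in box L, gradSq n f x

def Hnorm (L : ℝ) (n : ℕ) (u : Sp → Sp) : ℝ := ∫ x in box L, gradSqV n u x

def enorm3 (v : Sp) : ℝ := Real.sqrt (∑ i, v i ^ 2)

def supNorm (L : ℝ) (g : Sp → ℝ) : ℝ := sSup ((fun x => |g x|) '' box L)

def supNormV (L : ℝ) (u : Sp → Sp) : ℝ := sSup ((fun x => enorm3 (u x)) '' box L)

def div3 (u : Sp → Sp) (x : Sp) : ℝ := ∑ i, pd i (fun y => u y i) x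

def grad3 (f : Sp → ℝ) (x : Sp) : Sp := fun i => pd i f x

def lap3 (f : Sp → ℝ) (x : Sp) : ℝ := ∑ i, pd i (pd i f) x

def advect (u : Sp → Sp) (f : Sp → ℝ) (x : Sp) : ℝ := ∑ j, u x j * pd j f x

def curl3 (u : Sp → Sp) (x : Sp) : Sp :=
  ![pd 1 (fun y => u y 2) x - pd 2 (fun y => u y 1) x,
    pd 2 (fun y => u y 0) x - pd 0 (fun y => u y 2) x,
    pd 0 (fun y => u y 1) x - pd 1 (fun y => u y 0) x]

def cross3 (a b : Sp) : Sp :=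
  ![a 1 * b 2 - a 2 * b 1, a 2 * b 0 - a 0 * b 2, a 0 * b 1 - a 1 * b 0]

def tensorInner (n : ℕ) (f g : Sp → ℝ) (x : Sp) : ℝ :=
  ∑ m : Fin n → Fin 3, Dn n f x m * Dn n g x m


theorem gronwall_with_sqrt_forcing
    (T K : ℝ) (hT : 0 < T) (hK : 0 ≤ K)
    (a H H' : ℝ → ℝ)
    (ha_cont : ContinuousOn a (Icc 0 T))
    (ha_nonneg : ∀ t ∈ Icc (0:ℝ) T, 0 ≤ a t)
    (hH_nonneg : ∀ t ∈ Icc (0:ℝ) T, 0 ≤ H t)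
    (hH_deriv : ∀ t ∈ Icc (0:ℝ) T, HasDerivAt H (H' t) t)
    (hineq : ∀ t ∈ Icc (0:ℝ) T, H' t ≤ a t * H t + K * Real.sqrt (H t)) :
    ∀ t ∈ Icc (0:ℝ) T,
      H t ≤ Real.exp (∫ s in (0:ℝ)..t, a s) * (Real.sqrt (H 0) + K / 2 * t) ^ 2 := by
  intro t ht
  -- continuous extension of `a`
  set ab : ℝ → ℝ := Set.IccExtend hT.le ((Icc (0:ℝ) T).restrict a) with hab
  have hab_cont : Continuous ab := (ha_cont.restrict).Icc_extend'
  have hab_eq : ∀ s ∈ Icc (0:ℝ) T, ab s = a s := by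
    intro s hs
    simp [hab, Set.IccExtend_of_mem hT.le _ hs]; rfl
  have hab_nonneg : ∀ s, 0 ≤ ab s := by
    intro s
    exact ha_nonneg _ (Set.projIcc 0 T hT.le s).2
  set A : ℝ → ℝ := fun x => ∫ s in (0:ℝ)..x, ab s with hA
  have hA_deriv : ∀ x, HasDerivAt A (ab x) x := fun x =>
    (hab_cont.integral_hasStrictDerivAt 0 x).hasDerivAt
  have hA_nonneg : ∀ x ∈ Icc (0:ℝ) T, 0 ≤ A x := by
    intro x hx
    exact intervalIntegral.integral_nonneg hx.1 (fun s _ => hab_nonneg s)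
  have hA_int : A t = ∫ s in (0:ℝ)..t, a s := by
    apply intervalIntegral.integral_congr
    intro s hs
    rw [Set.uIcc_of_le ht.1] at hs
    exact hab_eq s ⟨hs.1, hs.2.trans ht.2⟩
  have hHcont : ContinuousOn H (Icc 0 T) := fun x hx =>
    (hH_deriv x hx).continuousAt.continuousWithinAt
  -- the key ε-estimate
  have key : ∀ ε > (0:ℝ),
      H t ≤ Real.exp (A t) * (Real.sqrt (H 0 + ε) + (K + ε) / 2 * t) ^ 2 := by
    intro ε hε
    set c := Real.sqrt (H 0 + ε) with hc
    set k := K + ε with hk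
    have hc_pos : 0 < c := Real.sqrt_pos.2 (by linarith [hH_nonneg 0 ⟨le_refl 0, hT.le⟩])
    have hk_pos : 0 < k := by positivity
    set B : ℝ → ℝ := fun x => Real.exp (A x) * (c + k / 2 * x) ^ 2 with hB
    set B' : ℝ → ℝ := fun x =>
      ab x * Real.exp (A x) * (c + k / 2 * x) ^ 2
        + Real.exp (A x) * (k * (c + k / 2 * x)) with hB'
    have hBd : ∀ x, HasDerivAt B (B' x) x := by
      intro x
      have h1 : HasDerivAt (fun y => Real.exp (A y)) (ab x * Real.exp (A x)) x := by
        simpa [mul_comm] using (hA_deriv x).exp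
      have h2 : HasDerivAt (fun y => (c + k / 2 * y) ^ 2) (k * (c + k / 2 * x)) x := by
        have : HasDerivAt (fun y => c + k / 2 * y) (k / 2) x := by
          simpa using ((hasDerivAt_id x).const_mul (k / 2)).const_add c
        have := this.pow 2
        exact this.congr_deriv (by ring)
      exact h1.mul h2
    have hmain : ∀ x ∈ Icc (0:ℝ) T, H x ≤ B x := by
      have ha0 : H 0 ≤ B 0 := by
        have hA00 : A 0 = 0 := by simp [hA]
        have : B 0 = H 0 + ε := by
          rw [hB]
          simp [hA00, hc, Real.sq_sqrt (by linarith [hH_nonneg 0 ⟨le_refl 0, hT.le⟩] : (0:ℝ) ≤ H 0 + ε)]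
        rw [this]; linarith
      apply image_le_of_deriv_right_lt_deriv_boundary hHcont
        (fun x hx => (hH_deriv x (Ico_subset_Icc_self hx)).hasDerivWithinAt)
        ha0 hBd
      · -- bound : H x = B x → H' x < B' x
        intro x hx hEq
        have hxIcc : x ∈ Icc (0:ℝ) T := Ico_subset_Icc_self hx
        have hP_pos : 0 < c + k / 2 * x := by
          have : 0 ≤ k / 2 * x := mul_nonneg (by positivity) hx.1
          linarith
        have hA0 : 0 ≤ A x := hA_nonneg x hxIcc
        have hsq : Real.sqrt (H x) = Real.exp (A x / 2) * (c + k / 2 * x) := by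
          rw [hEq]
          have he2 : Real.exp (A x / 2) ^ 2 = Real.exp (A x) := by
            rw [sq, ← Real.exp_add]; ring_nf
          have hBx : B x = (Real.exp (A x / 2) * (c + k / 2 * x)) ^ 2 := by
            rw [hB, mul_pow, he2]
          rw [hBx, Real.sqrt_sq (mul_nonneg (Real.exp_pos _).le hP_pos.le)]
        have h1 : H' x ≤ a x * H x + K * Real.sqrt (H x) := hineq x hxIcc
        rw [hsq, hEq] at h1
        have h2 : K * (Real.exp (A x / 2) * (c + k / 2 * x))
            < Real.exp (A x) * (k * (c + k / 2 * x)) := by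
          have he : Real.exp (A x / 2) ≤ Real.exp (A x) :=
            Real.exp_le_exp.2 (by linarith)
          have hKe : K * Real.exp (A x / 2) ≤ K * Real.exp (A x) :=
            mul_le_mul_of_nonneg_left he hK
          have hKk : K * Real.exp (A x) < k * Real.exp (A x) := by
            have := Real.exp_pos (A x)
            nlinarith
          calc K * (Real.exp (A x / 2) * (c + k / 2 * x))
              = K * Real.exp (A x / 2) * (c + k / 2 * x) := by ring
            _ ≤ K * Real.exp (A x) * (c + k / 2 * x) :=
                mul_le_mul_of_nonneg_right hKe hP_pos.le
            _ < k * Real.exp (A x) * (c + k / 2 * x) :=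
                mul_lt_mul_of_pos_right hKk hP_pos
            _ = Real.exp (A x) * (k * (c + k / 2 * x)) := by ring
        have haab : a x = ab x := (hab_eq x hxIcc).symm
        calc H' x ≤ a x * B x + K * (Real.exp (A x / 2) * (c + k / 2 * x)) := h1
          _ < a x * B x + Real.exp (A x) * (k * (c + k / 2 * x)) := by linarith
          _ = B' x := by rw [hB', haab, hB]; ring
    exact hmain t ht
  -- take ε → 0⁺
  have htend : Filter.Tendsto
      (fun ε => Real.exp (A t) * (Real.sqrt (H 0 + ε) + (K + ε) / 2 * t) ^ 2)
      (nhdsWithin 0 (Set.Ioi 0))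
      (nhds (Real.exp (A t) * (Real.sqrt (H 0) + K / 2 * t) ^ 2)) := by
    have hcont : Continuous fun ε : ℝ =>
        Real.exp (A t) * (Real.sqrt (H 0 + ε) + (K + ε) / 2 * t) ^ 2 := by
      fun_prop
    have := hcont.tendsto 0
    simp only [add_zero] at this
    exact this.mono_left nhdsWithin_le_nhds
  rw [← hA_int]
  refine ge_of_tendsto htend ?_
  filter_upwards [self_mem_nhdsWithin] with ε hε
  exact key ε hε
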